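/- arXiv:1803.01835 — 2 statements merged into one kernel-verified Lean document; each statement's English description precedes it below -/
import Mathlib

section
/- For every dimension d ≥ 1 there is a constant c ≥ 1, independent of α, such that for all α ∈ (0,2) and all ξ ∈ ℝ, one has c⁻¹|ξ|^α ≤ α(2−α)∫_ℝ (1 − cos(ξh))·2/|h|^{1+α} dh ≤ c|ξ|^α. (Equivalently, the one-dimensional symbol α(2−α)∫_ℝ(1−e^{iξh})²/|h|^{1+α} dh is comparable to |ξ|^α uniformly in α.) -/
open MeasureTheory Real Set

noncomputable def gg (α u : ℝ) : ℝ := (1 - Real.cos u) / u ^ (1 + α)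

lemma one_sub_cos_eq (u : ℝ) : 1 - Real.cos u = 2 * Real.sin (u / 2) ^ 2 := by
  have h1 := Real.sin_sq_add_cos_sq (u / 2)
  have h2 := Real.cos_sq (u / 2)
  have h3 : 2 * (u / 2) = u := by ring
  rw [h3] at h2
  nlinarith

lemma one_sub_cos_nonneg (u : ℝ) : 0 ≤ 1 - Real.cos u := by
  nlinarith [Real.cos_le_one u]

lemma one_sub_cos_le_two (u : ℝ) : 1 - Real.cos u ≤ 2 := by
  nlinarith [Real.neg_one_le_cos u]

lemma one_sub_cos_le_sq (u : ℝ) : 1 - Real.cos u ≤ u ^ 2 / 2 := by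
  have h := Real.sin_sq_le_sq (x := u / 2)
  rw [one_sub_cos_eq]; nlinarith

lemma sq_le_one_sub_cos {u : ℝ} (h0 : 0 < u) (h1 : u ≤ 1) :
    u ^ 2 / 3 ≤ 1 - Real.cos u := by
  have h := Real.sin_gt_sub_cube (x := u / 2) (by linarith)
  have hu2 : u ^ 2 ≤ 1 := by nlinarith
  have hu3 : u ^ 3 ≤ u := by nlinarith [mul_le_mul_of_nonneg_right hu2 h0.le]
  have hA : 15 * u / 32 ≤ u / 2 - (u / 2) ^ 3 / 6 := by nlinarith
  have hsin : 15 * u / 32 < Real.sin (u / 2) := lt_of_le_of_lt hA h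
  have hpos : (0:ℝ) < 15 * u / 32 := by linarith
  rw [one_sub_cos_eq]
  nlinarith [sq_nonneg (Real.sin (u / 2) - 15 * u / 32)]

lemma gg_meas {α : ℝ} (h0 : 0 < α) : Measurable (gg α) :=
  (measurable_const.sub Real.continuous_cos.measurable).div
    ((continuous_id.rpow_const fun _ => Or.inr (by linarith)).measurable)

lemma gg_nonneg {α u : ℝ} (hu : 0 < u) : 0 ≤ gg α u :=
  div_nonneg (one_sub_cos_nonneg u) (Real.rpow_nonneg hu.le _)

lemma gg_le_small {α : ℝ} {u : ℝ} (hu : 0 < u) :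
    gg α u ≤ u ^ (1 - α) / 2 := by
  have hpow : (0:ℝ) < u ^ (1 + α) := Real.rpow_pos_of_pos hu _
  have key : (u ^ 2 / 2) / u ^ (1 + α) = u ^ (1 - α) / 2 := by
    rw [div_right_comm, ← Real.rpow_two, ← Real.rpow_sub hu,
      show (2:ℝ) - (1 + α) = 1 - α by ring]
  rw [← key, gg]
  exact div_le_div_of_nonneg_right (one_sub_cos_le_sq u) hpow.le

lemma gg_ge_small {α : ℝ} {u : ℝ} (hu : 0 < u) (hu1 : u ≤ 1) :
    u ^ (1 - α) / 3 ≤ gg α u := by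
  have hpow : (0:ℝ) < u ^ (1 + α) := Real.rpow_pos_of_pos hu _
  have key : (u ^ 2 / 3) / u ^ (1 + α) = u ^ (1 - α) / 3 := by
    rw [div_right_comm, ← Real.rpow_two, ← Real.rpow_sub hu,
      show (2:ℝ) - (1 + α) = 1 - α by ring]
  rw [← key, gg]
  exact div_le_div_of_nonneg_right (sq_le_one_sub_cos hu hu1) hpow.le

lemma gg_le_tail {α : ℝ} {u : ℝ} (hu : 1 < u) :
    gg α u ≤ 2 * u ^ (-(1 + α)) := by
  have hu0 : (0:ℝ) < u := lt_trans one_pos hu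
  have hpow : (0:ℝ) < u ^ (1 + α) := Real.rpow_pos_of_pos hu0 _
  rw [gg, Real.rpow_neg hu0.le, ← div_eq_mul_inv]
  exact div_le_div_of_nonneg_right (one_sub_cos_le_two u) hpow.le
lemma gg_int_Ioc {α : ℝ} (h0 : 0 < α) (h2 : α < 2) :
    IntegrableOn (gg α) (Ioc 0 1) := by
  have hmaj : IntegrableOn (fun u : ℝ => u ^ (1 - α) / 2) (Ioc 0 1) :=
    ((intervalIntegral.intervalIntegrable_rpow' (a := 0) (b := 1) (by linarith : (-1:ℝ) < 1 - α)).1).div_const 2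
  refine hmaj.mono' ((gg_meas h0).aestronglyMeasurable.restrict) ?_
  filter_upwards [ae_restrict_mem measurableSet_Ioc] with u hu
  rw [Real.norm_eq_abs, abs_of_nonneg (gg_nonneg hu.1)]
  exact gg_le_small hu.1

lemma gg_int_Ioi {α : ℝ} (h0 : 0 < α) (h2 : α < 2) :
    IntegrableOn (gg α) (Ioi 1) := by
  have hmaj : IntegrableOn (fun u : ℝ => 2 * u ^ (-(1 + α))) (Ioi 1) :=
    (integrableOn_Ioi_rpow_of_lt (by linarith) one_pos).const_mul 2
  refine hmaj.mono' ((gg_meas h0).aestronglyMeasurable.restrict) ?_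
  filter_upwards [ae_restrict_mem measurableSet_Ioi] with u hu
  rw [Real.norm_eq_abs, abs_of_nonneg (gg_nonneg (lt_trans one_pos hu))]
  exact gg_le_tail hu

lemma gg_int {α : ℝ} (h0 : 0 < α) (h2 : α < 2) :
    IntegrableOn (gg α) (Ioi 0) := by
  rw [← Ioc_union_Ioi_eq_Ioi (zero_le_one : (0:ℝ) ≤ 1)]
  exact (gg_int_Ioc h0 h2).union (gg_int_Ioi h0 h2)

lemma int_rpow_Ioc {α : ℝ} (h2 : α < 2) :
    ∫ u in Ioc (0:ℝ) 1, u ^ (1 - α) = 1 / (2 - α) := by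
  rw [← intervalIntegral.integral_of_le (zero_le_one : (0:ℝ) ≤ 1),
    integral_rpow (Or.inl (by linarith : (-1:ℝ) < 1 - α)),
    Real.one_rpow, Real.zero_rpow (by intro h; nlinarith : 1 - α + 1 ≠ 0),
    show 1 - α + 1 = 2 - α by ring, sub_zero]

lemma gg_upper {α : ℝ} (h0 : 0 < α) (h2 : α < 2) :
    α * (2 - α) * (∫ u in Ioi (0:ℝ), gg α u) ≤ 5 := by
  have h2α : (0:ℝ) < 2 - α := by linarith
  have hmaj1 : IntegrableOn (fun u : ℝ => u ^ (1 - α) / 2) (Ioc 0 1) :=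
    ((intervalIntegral.intervalIntegrable_rpow' (by linarith : (-1:ℝ) < 1 - α)).1).div_const 2
  have hmaj2 : IntegrableOn (fun u : ℝ => 2 * u ^ (-(1 + α))) (Ioi 1) :=
    (integrableOn_Ioi_rpow_of_lt (by linarith) one_pos).const_mul 2
  have A : ∫ u in Ioc (0:ℝ) 1, gg α u ≤ 1 / (2 * (2 - α)) := by
    have := setIntegral_mono_on (gg_int_Ioc h0 h2) hmaj1 measurableSet_Ioc
      (fun u hu => gg_le_small hu.1)
    rw [integral_div, int_rpow_Ioc h2] at this
    calc ∫ u in Ioc (0:ℝ) 1, gg α u ≤ 1 / (2 - α) / 2 := this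
    _ = 1 / (2 * (2 - α)) := by rw [div_div]; ring_nf
  have B : ∫ u in Ioi (1:ℝ), gg α u ≤ 2 / α := by
    have := setIntegral_mono_on (gg_int_Ioi h0 h2) hmaj2 measurableSet_Ioi
      (fun u hu => gg_le_tail hu)
    rw [integral_const_mul, integral_Ioi_rpow_of_lt (by linarith) one_pos] at this
    rw [show -(1+α)+1 = -α by ring, Real.one_rpow] at this
    calc ∫ u in Ioi (1:ℝ), gg α u ≤ 2 * (-1 / -α) := this
    _ = 2 / α := by rw [neg_div_neg_eq]; ring
  have hsplit : ∫ u in Ioi (0:ℝ), gg α u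
      = (∫ u in Ioc (0:ℝ) 1, gg α u) + ∫ u in Ioi (1:ℝ), gg α u := by
    rw [← Ioc_union_Ioi_eq_Ioi (zero_le_one : (0:ℝ) ≤ 1)]
    exact setIntegral_union (Ioc_disjoint_Ioi le_rfl) measurableSet_Ioi
      (gg_int_Ioc h0 h2) (gg_int_Ioi h0 h2)
  have hJ : ∫ u in Ioi (0:ℝ), gg α u ≤ 1 / (2 * (2 - α)) + 2 / α := by
    rw [hsplit]; linarith
  have hprod : 0 ≤ α * (2 - α) := by positivity
  have := mul_le_mul_of_nonneg_left hJ hprod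
  have heq : α * (2 - α) * (1 / (2 * (2 - α)) + 2 / α) = α / 2 + 2 * (2 - α) := by
    field_simp
  rw [heq] at this
  linarith

lemma gg_lower1 {α : ℝ} (h0 : 0 < α) (h2 : α < 2) :
    1 / 3 ≤ (2 - α) * ∫ u in Ioi (0:ℝ), gg α u := by
  have h2α : (0:ℝ) < 2 - α := by linarith
  have hmaj1 : IntegrableOn (fun u : ℝ => u ^ (1 - α) / 3) (Ioc 0 1) :=
    ((intervalIntegral.intervalIntegrable_rpow' (by linarith : (-1:ℝ) < 1 - α)).1).div_const 3
  have A : 1 / (3 * (2 - α)) ≤ ∫ u in Ioc (0:ℝ) 1, gg α u := by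
    have := setIntegral_mono_on hmaj1 (gg_int_Ioc h0 h2) measurableSet_Ioc
      (fun u hu => gg_ge_small hu.1 hu.2)
    rw [integral_div, int_rpow_Ioc h2] at this
    calc 1 / (3 * (2 - α)) = 1 / (2 - α) / 3 := by rw [div_div]; ring_nf
    _ ≤ _ := this
  have B : ∫ u in Ioc (0:ℝ) 1, gg α u ≤ ∫ u in Ioi (0:ℝ), gg α u := by
    refine setIntegral_mono_set (gg_int h0 h2) ?_ (Ioc_subset_Ioi_self.eventuallyLE)
    filter_upwards [ae_restrict_mem measurableSet_Ioi] with u hu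
    exact gg_nonneg hu
  have hC : 1 / (3 * (2 - α)) ≤ ∫ u in Ioi (0:ℝ), gg α u := le_trans A B
  have := mul_le_mul_of_nonneg_left hC h2α.le
  calc (1:ℝ)/3 = (2 - α) * (1 / (3 * (2 - α))) := by field_simp
  _ ≤ _ := this
lemma ibp_bound {α : ℝ} (h0 : 0 < α) (h1 : α ≤ 1) {N : ℝ} (hN : (4:ℝ) ≤ N) :
    |∫ x in (4:ℝ)..N, x ^ (-(1+α)) * Real.cos x| ≤ 1 := by
  have hpos : ∀ x ∈ uIcc (4:ℝ) N, (4:ℝ) ≤ x := by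
    intro x hx; rw [uIcc_of_le hN] at hx; exact hx.1
  have hder : ∀ x ∈ uIcc (4:ℝ) N,
      HasDerivAt (fun x : ℝ => x ^ (-(1+α))) (-(1+α) * x ^ (-(1+α)-1)) x := by
    intro x hx
    exact Real.hasDerivAt_rpow_const (Or.inl (by have := hpos x hx; intro h; rw [h] at this; linarith))
  have hsin : ∀ x ∈ uIcc (4:ℝ) N, HasDerivAt Real.sin (Real.cos x) x :=
    fun x _ => Real.hasDerivAt_sin x
  have hcont : ContinuousOn (fun x : ℝ => -(1+α) * x ^ (-(1+α)-1)) (uIcc 4 N) := by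
    refine continuousOn_const.mul (ContinuousOn.rpow_const continuousOn_id ?_)
    intro x hx; left; have := hpos x hx; intro h; rw [h] at this; linarith
  have hu' : IntervalIntegrable (fun x : ℝ => -(1+α) * x ^ (-(1+α)-1)) volume 4 N :=
    hcont.intervalIntegrable
  have hv' : IntervalIntegrable Real.cos volume 4 N :=
    Real.continuous_cos.intervalIntegrable _ _
  have H := intervalIntegral.integral_mul_deriv_eq_deriv_mul hder hsin hu' hv'
  have hb1 : ∀ x : ℝ, (4:ℝ) ≤ x → |x ^ (-(1+α)) * Real.sin x| ≤ 1/4 := by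
    intro x hx
    have hx1 : (1:ℝ) ≤ x := by linarith
    rw [abs_mul, abs_of_nonneg (Real.rpow_nonneg (by linarith) _)]
    have h1 : x ^ (-(1+α)) ≤ x ^ (-1:ℝ) :=
      Real.rpow_le_rpow_of_exponent_le hx1 (by linarith)
    have h2 : x ^ (-1:ℝ) = x⁻¹ := Real.rpow_neg_one x
    have h3 : x⁻¹ ≤ 1/4 := by
      rw [inv_le_comm₀ (by linarith) (by norm_num)]; simpa using hx
    calc x ^ (-(1+α)) * |Real.sin x| ≤ x ^ (-(1+α)) * 1 :=
          mul_le_mul_of_nonneg_left (Real.abs_sin_le_one x) (Real.rpow_nonneg (by linarith) _)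
    _ = x ^ (-(1+α)) := mul_one _
    _ ≤ 1/4 := by rw [← h2] at h3; linarith [h1, h3]
  have hb3 : |∫ x in (4:ℝ)..N, (-(1+α) * x ^ (-(1+α)-1)) * Real.sin x| ≤ 1/2 := by
    have habs := intervalIntegral.abs_integral_le_integral_abs (f := fun x : ℝ =>
      (-(1+α) * x ^ (-(1+α)-1)) * Real.sin x) (μ := volume) hN
    have hint1 : IntervalIntegrable (fun x : ℝ => |(-(1+α) * x ^ (-(1+α)-1)) * Real.sin x|)
        volume 4 N := (hcont.mul Real.continuous_sin.continuousOn).abs.intervalIntegrable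
    have hint2 : IntervalIntegrable (fun x : ℝ => 2 * x ^ (-2:ℝ)) volume 4 N := by
      refine ContinuousOn.intervalIntegrable ?_
      refine continuousOn_const.mul (ContinuousOn.rpow_const continuousOn_id ?_)
      intro x hx; left; have := hpos x hx; intro h; rw [h] at this; linarith
    have hmono := intervalIntegral.integral_mono_on hN hint1 hint2 ?_
    · have hval : ∫ x in (4:ℝ)..N, 2 * x ^ (-2:ℝ) ≤ 1/2 := by
        rw [intervalIntegral.integral_const_mul, integral_rpow (Or.inr ⟨by norm_num, by
          rw [uIcc_of_le hN]; intro h; linarith [h.1]⟩)]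
        rw [show (-2:ℝ)+1 = -1 by ring, Real.rpow_neg_one, Real.rpow_neg_one]
        have hN0 : (0:ℝ) < N := by linarith
        have : (0:ℝ) ≤ N⁻¹ := by positivity
        have h4 : (N⁻¹ - 4⁻¹) / (-1) = 4⁻¹ - N⁻¹ := by ring
        rw [h4]
        norm_num
        linarith
      linarith [habs, hmono, hval]
    · intro x hx
      have hx4 := hx.1
      have hx1 : (1:ℝ) ≤ x := by linarith
      rw [abs_mul, abs_mul, abs_neg, abs_of_nonneg (by linarith : (0:ℝ) ≤ 1+α),
        abs_of_nonneg (Real.rpow_nonneg (by linarith) _)]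
      have hh1 : x ^ (-(1+α)-1) ≤ x ^ (-2:ℝ) :=
        Real.rpow_le_rpow_of_exponent_le hx1 (by linarith)
      have hh2 : |Real.sin x| ≤ 1 := Real.abs_sin_le_one x
      have hrnn : (0:ℝ) ≤ x ^ (-(1+α)-1) := Real.rpow_nonneg (by linarith) _
      calc (1+α) * x ^ (-(1+α)-1) * |Real.sin x| ≤ (1+α) * x ^ (-(1+α)-1) * 1 := by
            exact mul_le_mul_of_nonneg_left hh2 (by positivity)
      _ = (1+α) * x ^ (-(1+α)-1) := mul_one _
      _ ≤ 2 * x ^ (-2:ℝ) := by nlinarith [Real.rpow_nonneg (show (0:ℝ) ≤ x by linarith) (-2:ℝ)]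
  rw [H]
  have e1 := hb1 N (by linarith)
  have e2 := hb1 4 le_rfl
  calc |N ^ (-(1+α)) * Real.sin N - 4 ^ (-(1+α)) * Real.sin 4
        - ∫ x in (4:ℝ)..N, (-(1+α) * x ^ (-(1+α)-1)) * Real.sin x|
      ≤ |N ^ (-(1+α)) * Real.sin N - 4 ^ (-(1+α)) * Real.sin 4|
        + |∫ x in (4:ℝ)..N, (-(1+α) * x ^ (-(1+α)-1)) * Real.sin x| := abs_sub _ _
    _ ≤ 1 := by
        have := abs_sub (N ^ (-(1+α)) * Real.sin N) ((4:ℝ) ^ (-(1+α)) * Real.sin 4)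
        linarith
lemma gg_lower2 {α : ℝ} (h0 : 0 < α) (h1 : α ≤ 1/16) :
    1/8 ≤ α * ∫ u in Ioi (0:ℝ), gg α u := by
  have hα1 : α ≤ 1 := by linarith
  have h2 : α < 2 := by linarith
  set N : ℝ := 16 ^ (1/α) with hNdef
  have h16 : (16:ℝ) ≤ N := by
    rw [hNdef]
    calc (16:ℝ) = 16 ^ (1:ℝ) := (Real.rpow_one _).symm
    _ ≤ 16 ^ (1/α) := Real.rpow_le_rpow_of_exponent_le (by norm_num)
        (by rw [le_div_iff₀ h0]; linarith)
  have hN4 : (4:ℝ) ≤ N := by linarith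
  have hNa : N ^ (-α) = 1/16 := by
    rw [hNdef, ← Real.rpow_mul (by norm_num : (0:ℝ) ≤ 16),
      show 1/α * (-α) = -1 by field_simp, Real.rpow_neg_one]
    norm_num
  have h4a : (1:ℝ)/4 ≤ (4:ℝ) ^ (-α) := by
    calc (1:ℝ)/4 = (4:ℝ) ^ (-1:ℝ) := by rw [Real.rpow_neg_one]; norm_num
    _ ≤ (4:ℝ) ^ (-α) := Real.rpow_le_rpow_of_exponent_le (by norm_num) (by linarith)
  -- interval integral of gg from 4 to N
  have hposIcc : ∀ x ∈ uIcc (4:ℝ) N, (4:ℝ) ≤ x := by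
    intro x hx; rw [uIcc_of_le hN4] at hx; exact hx.1
  have hg_eq : ∀ x ∈ uIcc (4:ℝ) N,
      gg α x = x ^ (-(1+α)) - x ^ (-(1+α)) * Real.cos x := by
    intro x hx
    have hx0 : (0:ℝ) < x := by linarith [hposIcc x hx]
    have hne : x ^ (1+α) ≠ 0 := ne_of_gt (Real.rpow_pos_of_pos hx0 _)
    rw [gg, Real.rpow_neg hx0.le]
    field_simp
  have hcont1 : ContinuousOn (fun x : ℝ => x ^ (-(1+α))) (uIcc 4 N) := by
    refine ContinuousOn.rpow_const continuousOn_id ?_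
    intro x hx; left; have := hposIcc x hx; intro h; rw [h] at this; linarith
  have hint1 : IntervalIntegrable (fun x : ℝ => x ^ (-(1+α))) volume 4 N :=
    hcont1.intervalIntegrable
  have hint2 : IntervalIntegrable (fun x : ℝ => x ^ (-(1+α)) * Real.cos x) volume 4 N :=
    (hcont1.mul Real.continuous_cos.continuousOn).intervalIntegrable
  have hsplit : ∫ x in (4:ℝ)..N, gg α x
      = (∫ x in (4:ℝ)..N, x ^ (-(1+α))) - ∫ x in (4:ℝ)..N, x ^ (-(1+α)) * Real.cos x := by
    rw [intervalIntegral.integral_congr hg_eq]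
    exact intervalIntegral.integral_sub hint1 hint2
  have hval : ∫ x in (4:ℝ)..N, x ^ (-(1+α)) = ((4:ℝ) ^ (-α) - N ^ (-α)) / α := by
    rw [integral_rpow (Or.inr ⟨by intro h; nlinarith, by
      rw [uIcc_of_le hN4]; intro h; linarith [h.1]⟩)]
    rw [show -(1+α)+1 = -α by ring]
    rw [show (N ^ (-α) - (4:ℝ) ^ (-α)) / (-α) = ((4:ℝ) ^ (-α) - N ^ (-α)) / α by
      rw [div_neg, ← neg_div, neg_sub]]
  have hcos := ibp_bound h0 hα1 hN4
  have hlow : ((4:ℝ) ^ (-α) - N ^ (-α)) / α - 1 ≤ ∫ x in (4:ℝ)..N, gg α x := by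
    rw [hsplit, hval]
    have := abs_le.1 hcos
    linarith [this.2]
  -- compare with integral over Ioi 0
  have hmono : ∫ x in (4:ℝ)..N, gg α x ≤ ∫ u in Ioi (0:ℝ), gg α u := by
    rw [intervalIntegral.integral_of_le hN4]
    refine setIntegral_mono_set (gg_int h0 h2) ?_ ?_
    · filter_upwards [ae_restrict_mem measurableSet_Ioi] with u hu
      exact gg_nonneg hu
    · exact HasSubset.Subset.eventuallyLE (fun x hx => lt_trans (by norm_num) hx.1)
  have hfinal : ((4:ℝ) ^ (-α) - N ^ (-α)) / α - 1 ≤ ∫ u in Ioi (0:ℝ), gg α u :=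
    le_trans hlow hmono
  have := mul_le_mul_of_nonneg_left hfinal h0.le
  have heq : α * (((4:ℝ) ^ (-α) - N ^ (-α)) / α - 1) = ((4:ℝ) ^ (-α) - N ^ (-α)) - α := by
    field_simp
  rw [heq, hNa] at this
  linarith
lemma gg_key {α : ℝ} (h0 : 0 < α) (h2 : α < 2) :
    1/20 ≤ α * (2 - α) * (4 * ∫ u in Ioi (0:ℝ), gg α u) ∧
      α * (2 - α) * (4 * ∫ u in Ioi (0:ℝ), gg α u) ≤ 20 := by
  set J := ∫ u in Ioi (0:ℝ), gg α u with hJ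
  have hup := gg_upper h0 h2
  constructor
  · rcases le_or_gt α (1/16) with hc | hc
    · have hl := gg_lower2 h0 hc
      have h2a : (1:ℝ) ≤ 2 - α := by linarith
      have key : (1:ℝ) * (1/8) ≤ (2 - α) * (α * J) :=
        mul_le_mul h2a hl (by norm_num) (by linarith)
      nlinarith [key]
    · have hl := gg_lower1 h0 h2
      have key : (1/16:ℝ) * (1/3) ≤ α * ((2 - α) * J) :=
        mul_le_mul (le_of_lt hc) hl (by norm_num) (by linarith)
      nlinarith [key]
  · nlinarith [hup]

lemma main_rewrite {α : ℝ} (h0 : 0 < α) (h2 : α < 2) {ξ : ℝ} (hξ : ξ ≠ 0) :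
    (∫ h : ℝ, (1 - Real.cos (ξ * h)) * 2 / |h| ^ (1 + α))
      = |ξ| ^ α * (4 * ∫ u in Ioi (0:ℝ), gg α u) := by
  have ht : (0:ℝ) < |ξ| := abs_pos.2 hξ
  set F : ℝ → ℝ := fun u => (1 - Real.cos u) * 2 / |u| ^ (1 + α) with hF
  have hpt : ∀ h : ℝ, (1 - Real.cos (ξ * h)) * 2 / |h| ^ (1 + α)
      = |ξ| ^ (1 + α) * F (ξ * h) := by
    intro h
    rcases eq_or_ne h 0 with rfl | hh
    · simp [hF]
    · simp only [hF]
      rw [abs_mul, Real.mul_rpow (abs_nonneg ξ) (abs_nonneg h)]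
      have hH : |h| ^ (1 + α) ≠ 0 := ne_of_gt (Real.rpow_pos_of_pos (abs_pos.2 hh) _)
      have hX : |ξ| ^ (1 + α) ≠ 0 := ne_of_gt (Real.rpow_pos_of_pos ht _)
      field_simp
  simp_rw [hpt]
  rw [integral_const_mul, MeasureTheory.Measure.integral_comp_mul_left F ξ]
  have hFabs : ∀ u : ℝ, F u = (fun v : ℝ => (1 - Real.cos v) * 2 / v ^ (1 + α)) |u| := by
    intro u; simp only [hF, Real.cos_abs, abs_abs]
  have hFint : (∫ u : ℝ, F u) = 4 * ∫ u in Ioi (0:ℝ), gg α u := by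
    calc (∫ u : ℝ, F u)
        = ∫ u : ℝ, (fun v : ℝ => (1 - Real.cos v) * 2 / v ^ (1 + α)) |u| := by
          exact integral_congr_ae (Filter.Eventually.of_forall hFabs)
      _ = 2 * ∫ v in Ioi (0:ℝ), (1 - Real.cos v) * 2 / v ^ (1 + α) :=
          integral_comp_abs (f := fun v : ℝ => (1 - Real.cos v) * 2 / v ^ (1 + α))
      _ = 2 * ∫ v in Ioi (0:ℝ), 2 * gg α v := by
          congr 1
          refine setIntegral_congr_fun measurableSet_Ioi (fun v _ => ?_)
          rw [gg]; ring
      _ = 4 * ∫ u in Ioi (0:ℝ), gg α u := by rw [integral_const_mul]; ring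
  rw [hFint, smul_eq_mul, abs_inv]
  rw [show |ξ| ^ (1 + α) = |ξ| * |ξ| ^ α by rw [Real.rpow_add ht, Real.rpow_one]]
  field_simp
theorem symbol_comparable (d : ℕ) (hd : 1 ≤ d) :
    ∃ c : ℝ, 1 ≤ c ∧ ∀ α : ℝ, 0 < α → α < 2 → ∀ ξ : ℝ,
      c⁻¹ * |ξ| ^ α ≤
        α * (2 - α) * (∫ h : ℝ, (1 - Real.cos (ξ * h)) * 2 / |h| ^ (1 + α)) ∧
      α * (2 - α) * (∫ h : ℝ, (1 - Real.cos (ξ * h)) * 2 / |h| ^ (1 + α)) ≤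
        c * |ξ| ^ α := by
  refine ⟨20, by norm_num, ?_⟩
  intro α h0 h2 ξ
  rcases eq_or_ne ξ 0 with rfl | hξ
  · have hint : (∫ h : ℝ, (1 - Real.cos ((0:ℝ) * h)) * 2 / |h| ^ (1 + α)) = 0 := by
      simp
    rw [hint, abs_zero, Real.zero_rpow (ne_of_gt h0)]
    norm_num
  · have hkey := gg_key h0 h2
    have hre := main_rewrite h0 h2 hξ
    rw [hre]
    have hP : (0:ℝ) < |ξ| ^ α := Real.rpow_pos_of_pos (abs_pos.2 hξ) _
    constructor
    · have := mul_le_mul_of_nonneg_left hkey.1 hP.le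
      nlinarith [this]
    · have := mul_le_mul_of_nonneg_left hkey.2 hP.le
      nlinarith [this]
end

section
/- Let d ≥ 2, α₁,…,α_d ∈ (0,2), and β = Σ_{j=1}^d 1/α_j. Define K : ℝ^d → ℝ by K(ξ) = (Σ_{k=1}^d |ar{ξ}_k|^{α_k})^{-1/2} where ξ_k are the coordinates of ξ. Then K belongs to the weak L^{2β} space, i.e., there is a constant C (depending on d only) such that for all t > 0, the Lebesgue measure of {ξ ∈ ℝ^d : K(ξ) ≥ t} is at most C · t^{-2β}. -/
open MeasureTheory Real

theorem K_weak_L2beta (d : ℕ) (hd : 2 ≤ d) (α : Fin d → ℝ)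
    (hα : ∀ k, 0 < α k ∧ α k < 2) (β : ℝ) (hβ : β = ∑ j, 1 / α j) :
    ∃ C : ℝ, 0 < C ∧ ∀ t : ℝ, 0 < t →
      volume {ξ : Fin d → ℝ | t ≤ (∑ k, |ξ k| ^ α k) ^ (-(1 / 2 : ℝ))} ≤
        ENNReal.ofReal (C * t ^ (-(2 * β))) := by
  refine ⟨2 ^ d, by positivity, fun t ht => ?_⟩
  set r : Fin d → ℝ := fun k => t ^ (-(2 / α k)) with hr
  have hrpos : ∀ k, 0 < r k := fun k => rpow_pos_of_pos ht _
  have hsub : {ξ : Fin d → ℝ | t ≤ (∑ k, |ξ k| ^ α k) ^ (-(1 / 2 : ℝ))} ⊆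
      Set.pi Set.univ (fun k => Set.Icc (-(r k)) (r k)) := by
    intro ξ hξ k _
    simp only [Set.mem_setOf_eq] at hξ
    set S := ∑ j, |ξ j| ^ α j with hS
    have hS0 : 0 ≤ S := Finset.sum_nonneg fun j _ => rpow_nonneg (abs_nonneg _) _
    have hSpos : 0 < S := by
      rcases hS0.lt_or_eq with h | h
      · exact h
      · exfalso
        rw [← h, Real.zero_rpow (by norm_num)] at hξ
        linarith
    have h2 : t ^ (2 : ℝ) ≤ S ^ (-1 : ℝ) := by
      calc t ^ (2 : ℝ) ≤ (S ^ (-(1 / 2) : ℝ)) ^ (2 : ℝ) :=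
            Real.rpow_le_rpow ht.le hξ (by norm_num)
        _ = S ^ (-1 : ℝ) := by
            rw [← Real.rpow_mul hS0]; norm_num
    have h1 : S ≤ t ^ (-2 : ℝ) := by
      rw [Real.rpow_neg_one] at h2
      rw [Real.rpow_neg ht.le]
      have ht2 : (0 : ℝ) < t ^ (2 : ℝ) := rpow_pos_of_pos ht _
      rw [le_inv_comm₀ ht2 hSpos] at h2
      exact h2
    have hk : |ξ k| ^ α k ≤ S :=
      Finset.single_le_sum (f := fun j => |ξ j| ^ α j)
        (fun j _ => rpow_nonneg (abs_nonneg _) _) (Finset.mem_univ k)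
    have hαk := hα k
    have habs : |ξ k| ≤ r k := by
      have h3 : (|ξ k| ^ α k) ^ (1 / α k) ≤ (t ^ (-2 : ℝ)) ^ (1 / α k) :=
        Real.rpow_le_rpow (rpow_nonneg (abs_nonneg _) _) (hk.trans h1)
          (one_div_nonneg.mpr (hα k).1.le)
      rwa [← Real.rpow_mul (abs_nonneg _), mul_one_div, div_self hαk.1.ne',
        Real.rpow_one, ← Real.rpow_mul ht.le, show (-2 : ℝ) * (1 / α k) = -(2 / α k) by ring]
        at h3
    exact ⟨neg_le_of_neg_le ((neg_le_abs _).trans habs), (le_abs_self _).trans habs⟩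
  calc volume {ξ : Fin d → ℝ | t ≤ (∑ k, |ξ k| ^ α k) ^ (-(1 / 2 : ℝ))}
      ≤ volume (Set.pi Set.univ (fun k => Set.Icc (-(r k)) (r k))) :=
        measure_mono hsub
    _ = ∏ k, volume (Set.Icc (-(r k)) (r k)) := volume_pi_pi _
    _ = ∏ k, ENNReal.ofReal (2 * r k) := by
        simp only [Real.volume_Icc]
        congr 1; ext k; congr 1; ring
    _ = ENNReal.ofReal (∏ k, 2 * r k) := by
        rw [← ENNReal.ofReal_prod_of_nonneg]
        intro k _; positivity
    _ = ENNReal.ofReal (2 ^ d * t ^ (-(2 * β))) := by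
        congr 1
        rw [Finset.prod_mul_distrib, Finset.prod_const, Finset.card_univ,
          Fintype.card_fin]
        congr 1
        rw [← Real.rpow_sum_of_pos ht]
        congr 1
        rw [hβ, Finset.mul_sum, ← Finset.sum_neg_distrib]
        exact Finset.sum_congr rfl fun j _ => by ring
end
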